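/- For every Θ ∈ ℝ^ℬ, the vector E_{ℓ∼γ}[H(−Θ, ℓ)] is the unique minimizer over u ∈ Δ(ℬ) of the function u ↦ ⟨Θ, u⟩ + R_𝒩(u); that is, argmin_{u∈Δ(ℬ)} (⟨Θ, u⟩ + R_𝒩(u)) = ∇Φ_𝒩(−Θ) = E_{ℓ∼γ}[H(−Θ, ℓ)]. -/

import Mathlib

open MeasureTheory ProbabilityTheory Real Filter Function
open scoped ENNReal NNReal

/-- The product Gaussian measure `γ` on `ℝ^{𝒳×𝒜}` with i.i.d. `N(0,1)` coordinates. -/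
noncomputable def gaussianPerturbation (X A : Type*) [Fintype X] [Fintype A] :
    Measure ((X × A) → ℝ) :=
  Measure.pi fun _ : X × A => gaussianReal 0 1

/-- `Φ_𝒩(Θ) = E_{ℓ∼γ}[max_{h∈ℬ} (Θ[h] + q(ℓ)[h])]`. -/
noncomputable def PhiN {X A B : Type*} [Fintype X] [Fintype A] [Fintype B]
    (pol : B → X → A) (Θ : B → ℝ) : ℝ :=
  ∫ ℓ : (X × A) → ℝ, (⨆ h : B, (Θ h + ∑ x : X, ℓ (x, pol h x)))
    ∂(gaussianPerturbation X A)

/-- `R_𝒩(u) = sup_Θ (⟨Θ,u⟩ − Φ_𝒩(Θ))`, the Fenchel conjugate of `Φ_𝒩`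
(real-valued; it is finite on `Δ(ℬ)`). -/
noncomputable def RN {X A B : Type*} [Fintype X] [Fintype A] [Fintype B]
    (pol : B → X → A) (u : B → ℝ) : ℝ :=
  ⨆ Θ : B → ℝ, ((∑ h : B, Θ h * u h) - PhiN pol Θ)


lemma gauss_pdf_eq : ∀ x : ℝ, gaussianPDFReal 0 1 x = (√(2 * π))⁻¹ * rexp (-(2:ℝ)⁻¹ * x ^ 2) := by
  intro x
  simp only [gaussianPDFReal, NNReal.coe_one, mul_one, sub_zero]
  ring_nf

lemma integrable_id_gauss : Integrable (fun x : ℝ => x) (gaussianReal 0 1) := by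
  rw [gaussianReal_of_var_ne_zero 0 one_ne_zero]
  rw [integrable_withDensity_iff (measurable_gaussianPDF 0 1)
    (Filter.Eventually.of_forall fun x => ENNReal.ofReal_lt_top)]
  have : (fun x : ℝ => x * (gaussianPDF 0 1 x).toReal)
      = fun x : ℝ => (√(2 * π))⁻¹ * (x * rexp (-(2:ℝ)⁻¹ * x ^ 2)) := by
    funext x
    rw [gaussianPDF, ENNReal.toReal_ofReal (gaussianPDFReal_nonneg 0 1 x), gauss_pdf_eq x]
    ring
  rw [this]
  exact ((integrable_mul_exp_neg_mul_sq (by norm_num : (0:ℝ) < 2⁻¹)).const_mul _)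

lemma integral_id_gauss : ∫ x : ℝ, x ∂(gaussianReal 0 1) = 0 := by
  rw [gaussianReal_of_var_ne_zero 0 one_ne_zero]
  have h1 : (fun x : ℝ => ENNReal.ofReal (gaussianPDFReal 0 1 x))
      = fun x => ((gaussianPDFReal 0 1 x).toNNReal : ℝ≥0∞) := rfl
  rw [gaussianPDF_def, h1, integral_withDensity_eq_integral_smul
    ((measurable_gaussianPDFReal 0 1).real_toNNReal)]
  have h2 : ∀ x : ℝ, ((gaussianPDFReal 0 1 x).toNNReal : ℝ) • x = gaussianPDFReal 0 1 x * x := by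
    intro x
    simp [Real.coe_toNNReal _ (gaussianPDFReal_nonneg 0 1 x)]
  simp_rw [NNReal.smul_def, h2]
  have hodd : ∀ x : ℝ, gaussianPDFReal 0 1 (-x) * (-x) = -(gaussianPDFReal 0 1 x * x) := by
    intro x; rw [gauss_pdf_eq, gauss_pdf_eq]; ring_nf
  have := MeasureTheory.integral_neg_eq_self (fun x => gaussianPDFReal 0 1 x * x) volume
  simp_rw [hodd, integral_neg] at this
  linarith


section Pi
variable {X A : Type*} [Fintype X] [Fintype A]
local notation "γ" => gaussianPerturbation X A


instance : IsProbabilityMeasure (gaussianPerturbation X A) := by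
  unfold gaussianPerturbation; infer_instance

lemma map_eval_gauss (j : X × A) : (gaussianPerturbation X A).map (fun ℓ => ℓ j) =
    gaussianReal 0 1 := by
  classical
  ext s hs
  rw [Measure.map_apply (measurable_pi_apply j) hs]
  unfold gaussianPerturbation
  rw [show (fun f : (X × A) → ℝ => f j) ⁻¹' s
      = Set.pi Set.univ (Function.update (fun _ => Set.univ) j s) from Set.eval_preimage]
  rw [Measure.pi_pi]
  rw [Fintype.prod_eq_single j (fun i hi => by rw [Function.update_of_ne hi]; simp)]
  rw [Function.update_self]

lemma integrable_eval (j : X × A) : Integrable (fun ℓ : (X × A) → ℝ => ℓ j) γ := by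
  have h0 : Integrable (fun x : ℝ => x) ((gaussianPerturbation X A).map (fun ℓ => ℓ j)) := by
    rw [map_eval_gauss]; exact integrable_id_gauss
  exact (integrable_map_measure measurable_id'.aestronglyMeasurable
    (measurable_pi_apply j).aemeasurable).mp h0

lemma integral_eval (j : X × A) : ∫ ℓ : (X × A) → ℝ, ℓ j ∂γ = 0 := by
  have h0 : ∫ x : ℝ, x ∂((gaussianPerturbation X A).map (fun ℓ => ℓ j))
      = ∫ ℓ : (X × A) → ℝ, ℓ j ∂γ :=
    integral_map (measurable_pi_apply j).aemeasurable measurable_id'.aestronglyMeasurable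
  rw [← h0, map_eval_gauss]; exact integral_id_gauss

end Pi

section Sup
variable {X A B : Type*} [Fintype X] [Fintype A] [Fintype B] [Nonempty B]
local notation "γ" => gaussianPerturbation X A


lemma le_fciSup (f : B → ℝ) (h : B) : f h ≤ ⨆ h', f h' :=
  le_ciSup (Set.finite_range f).bddAbove h

lemma abs_fciSup_le (f : B → ℝ) : |⨆ h, f h| ≤ ∑ h, |f h| := by
  rw [abs_le]
  constructor
  · have h0 : B := Classical.arbitrary B
    refine le_trans ?_ (le_fciSup f h0)
    have h1 : |f h0| ≤ ∑ h, |f h| :=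
      Finset.single_le_sum (f := fun h => |f h|) (fun i _ => abs_nonneg _) (Finset.mem_univ h0)
    have h2 := neg_abs_le (f h0)
    linarith
  · exact ciSup_le fun h => (le_abs_self _).trans
      (Finset.single_le_sum (f := fun h => |f h|) (fun i _ => abs_nonneg _) (Finset.mem_univ h))

lemma measurable_supq (pol : B → X → A) (Θ : B → ℝ) :
    Measurable (fun ℓ : (X × A) → ℝ => ⨆ h, (Θ h + ∑ x, ℓ (x, pol h x))) := by
  refine Measurable.iSup fun h => measurable_const.add ?_
  exact Finset.measurable_sum _ fun x _ => measurable_pi_apply _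

lemma integrable_q (pol : B → X → A) (h : B) :
    Integrable (fun ℓ : (X × A) → ℝ => ∑ x, ℓ (x, pol h x)) γ :=
  integrable_finset_sum _ fun x _ => _root_.integrable_eval _

lemma integral_q (pol : B → X → A) (h : B) :
    ∫ ℓ : (X × A) → ℝ, (∑ x, ℓ (x, pol h x)) ∂γ = 0 := by
  rw [integral_finset_sum _ fun x _ => _root_.integrable_eval _]
  simp [_root_.integral_eval]

lemma integrable_supq (pol : B → X → A) (Θ : B → ℝ) :
    Integrable (fun ℓ : (X × A) → ℝ => ⨆ h, (Θ h + ∑ x, ℓ (x, pol h x))) γ := by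
  refine Integrable.mono (g := fun ℓ => ∑ h, |Θ h + ∑ x, ℓ (x, pol h x)|)
    (integrable_finset_sum _ fun h _ => ((integrable_const _).add (integrable_q pol h)).abs)
    (measurable_supq pol Θ).aestronglyMeasurable ?_
  refine Filter.Eventually.of_forall fun ℓ => ?_
  rw [Real.norm_eq_abs, Real.norm_eq_abs]
  exact (abs_fciSup_le _).trans (le_abs_self _)

end Sup

section Tie
variable {X A : Type*} [Fintype X] [Fintype A]
local notation "γ" => gaussianPerturbation X A


lemma gauss_singleton_null (v : ℝ) : gaussianReal 0 1 {v} = 0 :=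
  (gaussianReal_absolutelyContinuous 0 one_ne_zero) (measure_singleton v)

lemma null_of_affine_coord [DecidableEq X] [DecidableEq A] (j0 : X × A)
    (f : ((X × A) → ℝ) → ℝ) (hf : Measurable f)
    (hupd : ∀ ℓ r, f (Function.update ℓ j0 r) = f ℓ - ℓ j0 + r) (c : ℝ) :
    γ {ℓ : (X × A) → ℝ | f ℓ = c} = 0 := by
  classical
  set p : X × A → Prop := fun j => j ≠ j0 with hp
  have hmp := measurePreserving_piEquivPiSubtypeProd
    (fun _ : X × A => gaussianReal 0 1) p
  set e := MeasurableEquiv.piEquivPiSubtypeProd (fun _ : X × A => ℝ) p with he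
  -- extension of a `p`-indexed vector by zero
  set ext : ({j // p j} → ℝ) → ((X × A) → ℝ) :=
    fun y => fun j => if h : p j then y ⟨j, h⟩ else 0 with hext
  have hextm : Measurable ext := by
    refine measurable_pi_lambda _ fun j => ?_
    by_cases h : p j
    · simp only [hext, dif_pos h]
      exact measurable_pi_apply _
    · simp only [hext, dif_neg h]
      exact measurable_const
  set g : ({j // p j} → ℝ) → ℝ := fun y => f (ext y) with hg
  have hgm : Measurable g := hf.comp hextm
  have key : ∀ ℓ : (X × A) → ℝ, f ℓ = ℓ j0 + g (fun j => ℓ j.1) := by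
    intro ℓ
    have h1 : ext (fun j : {j // p j} => ℓ j.1) = Function.update ℓ j0 0 := by
      funext j
      by_cases h : p j
      · rw [Function.update_of_ne h]
        simp only [hext, dif_pos h]
      · have : j = j0 := not_not.mp h
        subst this
        simp [hext, h]
    rw [hg]
    simp only [h1, hupd ℓ 0]
    ring
  set d : {j // ¬ p j} := ⟨j0, not_not_intro rfl⟩ with hd
  set T : Set (({j // p j} → ℝ) × ({j // ¬ p j} → ℝ)) :=
    {yz | yz.2 d + g yz.1 = c} with hT
  have hTm : MeasurableSet T := by
    have : Measurable fun yz : ({j // p j} → ℝ) × ({j // ¬ p j} → ℝ) =>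
        yz.2 d + g yz.1 :=
      ((measurable_pi_apply d).comp measurable_snd).add (hgm.comp measurable_fst)
    exact this (measurableSet_singleton c)
  have hpre : e ⁻¹' T = {ℓ : (X × A) → ℝ | f ℓ = c} := by
    ext ℓ
    have h2 : (e ℓ).2 d = ℓ j0 := rfl
    have h1 : (e ℓ).1 = fun j : {j // p j} => ℓ j.1 := rfl
    simp only [Set.mem_preimage, hT, Set.mem_setOf_eq, h2, h1, key ℓ]
  have hprod : γ {ℓ : (X × A) → ℝ | f ℓ = c} =
      ((Measure.pi fun _ : {j // p j} => gaussianReal 0 1).prod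
        (Measure.pi fun _ : {j // ¬ p j} => gaussianReal 0 1)) T := by
    rw [← hpre]
    exact hmp.measure_preimage hTm.nullMeasurableSet
  rw [hprod]
  rw [Measure.measure_prod_null hTm]
  refine Filter.Eventually.of_forall fun y => ?_
  show (Measure.pi fun _ : {j // ¬ p j} => gaussianReal 0 1) (Prod.mk y ⁻¹' T) = 0
  have hslice : (Prod.mk y ⁻¹' T) = (fun z : {j // ¬ p j} → ℝ => z d) ⁻¹' {c - g y} := by
    ext z
    simp only [Set.mem_preimage, hT, Set.mem_setOf_eq, Set.mem_singleton_iff]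
    constructor <;> intro h <;> linarith
  rw [hslice]
  exact Measure.pi_eval_preimage_null _ (gauss_singleton_null _)

end Tie

section TiePair
variable {X A B : Type*} [Fintype X] [Fintype A] [Fintype B]
local notation "γ" => gaussianPerturbation X A


lemma tie_pair_null (pol : B → X → A) (Θ : B → ℝ) {h h' : B}
    (hx0 : ∃ x : X, pol h x ≠ pol h' x) :
    γ {ℓ : (X × A) → ℝ |
      -Θ h + ∑ x, ℓ (x, pol h x) = -Θ h' + ∑ x, ℓ (x, pol h' x)} = 0 := by
  classical
  obtain ⟨x0, hx0⟩ := hx0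
  set j0 : X × A := (x0, pol h x0) with hj0
  set f : ((X × A) → ℝ) → ℝ :=
    fun ℓ => (∑ x, ℓ (x, pol h x)) - ∑ x, ℓ (x, pol h' x) with hf
  have hs : ∀ hb : B, Measurable fun ℓ : (X × A) → ℝ => ∑ x, ℓ (x, pol hb x) :=
    fun hb => Finset.measurable_sum _ fun x _ => measurable_pi_apply _
  have hfm : Measurable f := (hs h).sub (hs h')
  have hupd : ∀ ℓ r, f (Function.update ℓ j0 r) = f ℓ - ℓ j0 + r := by
    intro ℓ r
    have hB : ∑ x, (Function.update ℓ j0 r) (x, pol h' x) = ∑ x, ℓ (x, pol h' x) := by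
      refine Finset.sum_congr rfl fun x _ => ?_
      refine Function.update_of_ne (fun heq => ?_) _ _
      by_cases hxx : x = x0
      · subst hxx; exact hx0 (congrArg Prod.snd heq).symm
      · exact hxx (congrArg Prod.fst heq)
    have hA : ∑ x, (Function.update ℓ j0 r) (x, pol h x)
        = (∑ x, ℓ (x, pol h x)) - ℓ j0 + r := by
      have e1 := Finset.sum_erase_add Finset.univ
        (fun x => (Function.update ℓ j0 r) (x, pol h x)) (Finset.mem_univ x0)
      have e2 := Finset.sum_erase_add Finset.univ
        (fun x => ℓ (x, pol h x)) (Finset.mem_univ x0)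
      have e3 : ∑ x ∈ Finset.univ.erase x0, (Function.update ℓ j0 r) (x, pol h x)
          = ∑ x ∈ Finset.univ.erase x0, ℓ (x, pol h x) := by
        refine Finset.sum_congr rfl fun x hx => ?_
        exact Function.update_of_ne
          (fun heq => (Finset.mem_erase.mp hx).1 (congrArg Prod.fst heq)) _ _
      have e4 : (Function.update ℓ j0 r) (x0, pol h x0) = r := by
        rw [hj0]; exact Function.update_self _ _ _
      rw [← e1, ← e2]
      beta_reduce
      rw [e3, e4]
      simp only [hj0]
      ring
    simp only [hf, hA, hB]
    ring
  have hset : {ℓ : (X × A) → ℝ |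
        -Θ h + ∑ x, ℓ (x, pol h x) = -Θ h' + ∑ x, ℓ (x, pol h' x)}
      = {ℓ : (X × A) → ℝ | f ℓ = Θ h - Θ h'} := by
    ext ℓ
    simp only [Set.mem_setOf_eq, hf]
    constructor <;> intro hh <;> linarith
  rw [hset]
  exact null_of_affine_coord j0 f hfm hupd _

lemma ae_no_tie (pol : B → X → A)
    (hsep : ∀ h h' : B, h ≠ h' → ∃ x : X, pol h x ≠ pol h' x) (Θ : B → ℝ) :
    ∀ᵐ ℓ : (X × A) → ℝ ∂γ, ∀ h h' : B, h ≠ h' →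
      -Θ h + ∑ x, ℓ (x, pol h x) ≠ -Θ h' + ∑ x, ℓ (x, pol h' x) := by
  have : ∀ᵐ ℓ : (X × A) → ℝ ∂γ, ∀ hp : B × B, hp.1 ≠ hp.2 →
      -Θ hp.1 + ∑ x, ℓ (x, pol hp.1 x) ≠ -Θ hp.2 + ∑ x, ℓ (x, pol hp.2 x) := by
    rw [ae_all_iff]
    intro hp
    by_cases hne : hp.1 = hp.2
    · exact Filter.Eventually.of_forall fun ℓ hcon => absurd hne hcon
    · have := tie_pair_null (X := X) (A := A) pol Θ (hsep hp.1 hp.2 hne)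
      rw [ae_iff]
      convert this using 2
      ext ℓ
      simp only [Set.mem_setOf_eq]
      tauto
  filter_upwards [this] with ℓ hℓ h h' hne
  exact hℓ (h, h') hne
end TiePair

section Core
variable {X A B : Type*} [Fintype X] [Fintype A] [Fintype B] [Nonempty B] [DecidableEq B]
local notation "γ" => gaussianPerturbation X A
variable (pol : B → X → A) (Θ : B → ℝ) (sel : ((X × A) → ℝ) → B)


/-- expected one-hot vector -/
noncomputable def expInd {X A : Type*} [Fintype X] [Fintype A] (B : Type*) [DecidableEq B]
    (sel : ((X × A) → ℝ) → B) : B → ℝ :=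
  fun h => ∫ ℓ : (X × A) → ℝ, (if sel ℓ = h then (1:ℝ) else 0) ∂(gaussianPerturbation X A)

variable (hmeas : ∀ h : B,
    Measurable fun ℓ : (X × A) → ℝ => (if sel ℓ = h then (1:ℝ) else 0))

include hmeas

lemma integrable_ind (h : B) :
    Integrable (fun ℓ : (X × A) → ℝ => (if sel ℓ = h then (1:ℝ) else 0)) γ := by
  refine Integrable.mono' (integrable_const 1) (hmeas h).aestronglyMeasurable ?_
  refine Filter.Eventually.of_forall fun ℓ => ?_
  by_cases hc : sel ℓ = h <;> simp [hc]

lemma expInd_mem : expInd B sel ∈ stdSimplex ℝ B := by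
  constructor
  · intro h
    exact integral_nonneg fun ℓ => by by_cases hc : sel ℓ = h <;> simp [hc]
  · simp only [expInd]
    rw [← integral_finset_sum _ fun h _ => integrable_ind sel hmeas h]
    have : ∀ ℓ : (X × A) → ℝ, ∑ h : B, (if sel ℓ = h then (1:ℝ) else 0) = 1 := by
      intro ℓ; simp
    simp_rw [this]
    simp

/-- the "selected value" function equals the sup a.e., given `hsel` -/
lemma integrable_ind_mul (c : B → ℝ) (h : B) :
    Integrable (fun ℓ : (X × A) → ℝ =>
      (if sel ℓ = h then (1:ℝ) else 0) * (c h + ∑ x, ℓ (x, pol h x))) γ := by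
  refine Integrable.bdd_mul ((integrable_const (c h)).add (integrable_q pol h))
    (hmeas h).aestronglyMeasurable (c := 1) (Filter.Eventually.of_forall fun ℓ => ?_)
  by_cases hc : sel ℓ = h <;> simp [hc]

lemma integral_ind_mul_const (c : B → ℝ) (h : B) :
    ∫ ℓ : (X × A) → ℝ, (c h * (if sel ℓ = h then (1:ℝ) else 0)) ∂γ
      = c h * expInd B sel h := by
  rw [integral_const_mul]
  rfl


omit hmeas in
lemma sup_eq_sel (hsel : ∀ᵐ ℓ : (X × A) → ℝ ∂γ, ∀ h' : B,
      -Θ h' + ∑ x : X, ℓ (x, pol h' x)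
        ≤ -Θ (sel ℓ) + ∑ x : X, ℓ (x, pol (sel ℓ) x)) :
    ∀ᵐ ℓ : (X × A) → ℝ ∂γ,
      (⨆ h : B, (-Θ h + ∑ x, ℓ (x, pol h x)))
        = -Θ (sel ℓ) + ∑ x, ℓ (x, pol (sel ℓ) x) := by
  filter_upwards [hsel] with ℓ hℓ
  exact le_antisymm (ciSup_le hℓ)
    (le_fciSup (fun h : B => -Θ h + ∑ x, ℓ (x, pol h x)) (sel ℓ))

omit hmeas in
lemma sum_ite_mul (c : B → ℝ) (b : B) :
    ∑ h : B, c h * (if b = h then (1:ℝ) else 0) = c b := by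
  simp

lemma subgrad
    (hsel : ∀ᵐ ℓ : (X × A) → ℝ ∂γ, ∀ h' : B,
      -Θ h' + ∑ x : X, ℓ (x, pol h' x)
        ≤ -Θ (sel ℓ) + ∑ x : X, ℓ (x, pol (sel ℓ) x))
    (Θ' : B → ℝ) :
    PhiN pol (fun h => -Θ h) + ∑ h, (Θ' h + Θ h) * expInd B sel h ≤ PhiN pol Θ' := by
  have hg2int : Integrable (fun ℓ : (X × A) → ℝ =>
      (⨆ h : B, (-Θ h + ∑ x, ℓ (x, pol h x)))
        + ∑ h : B, ((Θ' h + Θ h) * (if sel ℓ = h then (1:ℝ) else 0))) γ :=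
    (integrable_supq pol _).add
      (integrable_finset_sum _ fun h _ => (integrable_ind sel hmeas h).const_mul _)
  have hle : (fun ℓ : (X × A) → ℝ =>
      (⨆ h : B, (-Θ h + ∑ x, ℓ (x, pol h x)))
        + ∑ h : B, ((Θ' h + Θ h) * (if sel ℓ = h then (1:ℝ) else 0)))
      ≤ᵐ[γ] fun ℓ => ⨆ h : B, (Θ' h + ∑ x, ℓ (x, pol h x)) := by
    filter_upwards [sup_eq_sel pol Θ sel hsel] with ℓ hsup
    rw [hsup, sum_ite_mul]
    have : Θ' (sel ℓ) + ∑ x, ℓ (x, pol (sel ℓ) x)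
        ≤ ⨆ h : B, (Θ' h + ∑ x, ℓ (x, pol h x)) :=
      le_fciSup (fun h : B => Θ' h + ∑ x, ℓ (x, pol h x)) (sel ℓ)
    linarith
  have hmono := integral_mono_ae hg2int (integrable_supq pol Θ') hle
  have hEq : ∫ ℓ : (X × A) → ℝ, ((⨆ h : B, (-Θ h + ∑ x, ℓ (x, pol h x)))
        + ∑ h : B, ((Θ' h + Θ h) * (if sel ℓ = h then (1:ℝ) else 0))) ∂γ
      = PhiN pol (fun h => -Θ h) + ∑ h, (Θ' h + Θ h) * expInd B sel h := by
    rw [integral_add (integrable_supq pol _)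
      (integrable_finset_sum _ fun h _ => (integrable_ind sel hmeas h).const_mul _)]
    congr 1
    rw [integral_finset_sum _ fun h _ => (integrable_ind sel hmeas h).const_mul _]
    exact Finset.sum_congr rfl fun h _ => integral_ind_mul_const sel hmeas (fun h => Θ' h + Θ h) h
  rw [hEq] at hmono
  exact hmono

omit hmeas in
lemma phi_ge_coord (Θ' : B → ℝ) (h : B) : Θ' h ≤ PhiN pol Θ' := by
  have hint : Integrable (fun ℓ : (X × A) → ℝ => Θ' h + ∑ x, ℓ (x, pol h x)) γ :=
    (integrable_const _).add (integrable_q pol h)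
  have hmono := integral_mono_ae hint (integrable_supq pol Θ')
    (Filter.Eventually.of_forall fun ℓ =>
      le_fciSup (fun h' => Θ' h' + ∑ x, ℓ (x, pol h' x)) h)
  rw [integral_add (integrable_const _) (integrable_q pol h), integral_q pol h,
    integral_const] at hmono
  simp at hmono; exact hmono

omit hmeas in
lemma obj_bdd {u : B → ℝ} (hu : u ∈ stdSimplex ℝ B) (Θ' : B → ℝ) :
    ∑ h, Θ' h * u h - PhiN pol Θ' ≤ 0 := by
  have h1 : ∑ h : B, Θ' h * u h ≤ ∑ h : B, PhiN pol Θ' * u h :=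
    Finset.sum_le_sum fun h _ =>
      mul_le_mul_of_nonneg_right (phi_ge_coord pol Θ' h) (hu.1 h)
  rw [← Finset.mul_sum, hu.2, mul_one] at h1
  linarith


omit hmeas in
lemma fciSup_sub_le (a b : B → ℝ) :
    (⨆ h, a h) - (⨆ h, b h) ≤ ∑ h, |a h - b h| := by
  rw [sub_le_iff_le_add]
  refine ciSup_le fun h => ?_
  have h1 : a h ≤ b h + |a h - b h| := by
    have := le_abs_self (a h - b h); linarith
  have h2 : b h ≤ ⨆ h', b h' := le_fciSup b h
  have h3 : |a h - b h| ≤ ∑ h', |a h' - b h'| :=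
    Finset.single_le_sum (f := fun h' => |a h' - b h'|) (fun i _ => abs_nonneg _)
      (Finset.mem_univ h)
  linarith

omit hmeas in
lemma bound_aux {t : ℝ} (ht : 0 ≤ t) (w : B → ℝ) (ℓ : (X × A) → ℝ) :
    |(⨆ h : B, (-Θ h + t * w h + ∑ x, ℓ (x, pol h x)))
      - ⨆ h : B, (-Θ h + ∑ x, ℓ (x, pol h x))| ≤ t * ∑ h, |w h| := by
  have h1 := fciSup_sub_le (fun h : B => -Θ h + t * w h + ∑ x, ℓ (x, pol h x))
    (fun h : B => -Θ h + ∑ x, ℓ (x, pol h x))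
  have h2 := fciSup_sub_le (fun h : B => -Θ h + ∑ x, ℓ (x, pol h x))
    (fun h : B => -Θ h + t * w h + ∑ x, ℓ (x, pol h x))
  have he1 : ∑ h : B, |(-Θ h + t * w h + ∑ x, ℓ (x, pol h x))
      - (-Θ h + ∑ x, ℓ (x, pol h x))| = t * ∑ h, |w h| := by
    rw [Finset.mul_sum]
    refine Finset.sum_congr rfl fun h _ => ?_
    rw [show (-Θ h + t * w h + ∑ x, ℓ (x, pol h x))
      - (-Θ h + ∑ x, ℓ (x, pol h x)) = t * w h by ring, abs_mul, abs_of_nonneg ht]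
  have he2 : ∑ h : B, |(-Θ h + ∑ x, ℓ (x, pol h x))
      - (-Θ h + t * w h + ∑ x, ℓ (x, pol h x))| = t * ∑ h, |w h| := by
    rw [Finset.mul_sum]
    refine Finset.sum_congr rfl fun h _ => ?_
    rw [show (-Θ h + ∑ x, ℓ (x, pol h x))
      - (-Θ h + t * w h + ∑ x, ℓ (x, pol h x)) = -(t * w h) by ring, abs_neg, abs_mul,
      abs_of_nonneg ht]
  rw [abs_sub_le_iff]
  exact ⟨h1.trans he1.le, h2.trans he2.le⟩

lemma deriv_tendsto
    (hsep : ∀ h h' : B, h ≠ h' → ∃ x : X, pol h x ≠ pol h' x)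
    (hsel : ∀ᵐ ℓ : (X × A) → ℝ ∂γ, ∀ h' : B,
      -Θ h' + ∑ x : X, ℓ (x, pol h' x)
        ≤ -Θ (sel ℓ) + ∑ x : X, ℓ (x, pol (sel ℓ) x))
    (w : B → ℝ) :
    Filter.Tendsto (fun n : ℕ => (PhiN pol (fun h => -Θ h + ((n:ℝ)+1)⁻¹ * w h)
        - PhiN pol (fun h => -Θ h)) * ((n:ℝ)+1)) atTop
      (nhds (∑ h, w h * expInd B sel h)) := by
  classical
  have key : Filter.Tendsto (fun n : ℕ => ∫ ℓ : (X × A) → ℝ,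
      (((⨆ h : B, (-Θ h + ((n:ℝ)+1)⁻¹ * w h + ∑ x, ℓ (x, pol h x)))
        - ⨆ h : B, (-Θ h + ∑ x, ℓ (x, pol h x))) * ((n:ℝ)+1)) ∂γ) atTop
      (nhds (∫ ℓ : (X × A) → ℝ, (∑ h : B, w h * (if sel ℓ = h then (1:ℝ) else 0)) ∂γ)) := by
    refine tendsto_integral_of_dominated_convergence (fun _ => ∑ h : B, |w h|)
      (fun n => (((measurable_supq pol (fun h => -Θ h + ((n:ℝ)+1)⁻¹ * w h)).sub
        (measurable_supq pol (fun h => -Θ h))).mul_const _).aestronglyMeasurable)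
      (integrable_const _)
      (fun n => Filter.Eventually.of_forall fun ℓ => ?_) ?_
    · -- bound
      have hb := bound_aux pol Θ (t := ((n:ℝ)+1)⁻¹)
        (by positivity) w ℓ
      have hne0 : ((n:ℝ)+1) ≠ 0 := by positivity
      rw [Real.norm_eq_abs, abs_mul, abs_of_nonneg (by positivity : (0:ℝ) ≤ (n:ℝ)+1)]
      calc |(⨆ h : B, (-Θ h + ((n:ℝ)+1)⁻¹ * w h + ∑ x, ℓ (x, pol h x)))
            - ⨆ h : B, (-Θ h + ∑ x, ℓ (x, pol h x))| * ((n:ℝ)+1)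
          ≤ (((n:ℝ)+1)⁻¹ * ∑ h, |w h|) * ((n:ℝ)+1) :=
            mul_le_mul_of_nonneg_right hb (by positivity)
        _ = ∑ h, |w h| := by field_simp
    · -- limit
      filter_upwards [hsel, ae_no_tie pol hsep Θ] with ℓ hs ht
      rw [sum_ite_mul w (sel ℓ)]
      have hev : ∀ h : B, ∀ᶠ n : ℕ in atTop,
          -Θ h + ((n:ℝ)+1)⁻¹ * w h + ∑ x, ℓ (x, pol h x)
            ≤ -Θ (sel ℓ) + ((n:ℝ)+1)⁻¹ * w (sel ℓ) + ∑ x, ℓ (x, pol (sel ℓ) x) := by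
        intro h
        by_cases hne : h = sel ℓ
        · subst hne; exact Filter.Eventually.of_forall fun n => le_refl _
        · have hlt : -Θ h + ∑ x, ℓ (x, pol h x)
              < -Θ (sel ℓ) + ∑ x, ℓ (x, pol (sel ℓ) x) :=
            lt_of_le_of_ne (hs h) (ht h (sel ℓ) hne)
          have hbase : Filter.Tendsto (fun n : ℕ => ((n:ℝ)+1)⁻¹) atTop (nhds 0) := by
            simpa [one_div] using tendsto_one_div_add_atTop_nhds_zero_nat (𝕜 := ℝ)
          have htend : Filter.Tendsto
              (fun n : ℕ => ((n:ℝ)+1)⁻¹ * (w h - w (sel ℓ))) atTop (nhds 0) := by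
            simpa using hbase.mul_const (w h - w (sel ℓ))
          have hev' := htend.eventually_lt_const
            (show (0:ℝ) < (-Θ (sel ℓ) + ∑ x, ℓ (x, pol (sel ℓ) x))
              - (-Θ h + ∑ x, ℓ (x, pol h x)) by linarith)
          filter_upwards [hev'] with n hn
          rw [mul_sub] at hn
          linarith
      refine Filter.Tendsto.congr' ?_ tendsto_const_nhds
      filter_upwards [Filter.eventually_all.mpr hev] with n hn
      have hsup2 : (⨆ h : B, (-Θ h + ((n:ℝ)+1)⁻¹ * w h + ∑ x, ℓ (x, pol h x)))
          = -Θ (sel ℓ) + ((n:ℝ)+1)⁻¹ * w (sel ℓ) + ∑ x, ℓ (x, pol (sel ℓ) x) :=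
        le_antisymm (ciSup_le hn)
          (le_fciSup (fun h : B => -Θ h + ((n:ℝ)+1)⁻¹ * w h + ∑ x, ℓ (x, pol h x)) (sel ℓ))
      have hsup1 : (⨆ h : B, (-Θ h + ∑ x, ℓ (x, pol h x)))
          = -Θ (sel ℓ) + ∑ x, ℓ (x, pol (sel ℓ) x) :=
        le_antisymm (ciSup_le hs)
          (le_fciSup (fun h : B => -Θ h + ∑ x, ℓ (x, pol h x)) (sel ℓ))
      rw [hsup2, hsup1]
      have hne0 : ((n:ℝ)+1)⁻¹ * ((n:ℝ)+1) = 1 :=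
        inv_mul_cancel₀ (by positivity)
      calc w (sel ℓ)
          = (((n:ℝ)+1)⁻¹ * w (sel ℓ)) * ((n:ℝ)+1) := by
            rw [mul_comm (((n:ℝ)+1)⁻¹) (w (sel ℓ)), mul_assoc, hne0, mul_one]
        _ = ((-Θ (sel ℓ) + ((n:ℝ)+1)⁻¹ * w (sel ℓ) + ∑ x, ℓ (x, pol (sel ℓ) x))
            - (-Θ (sel ℓ) + ∑ x, ℓ (x, pol (sel ℓ) x))) * ((n:ℝ)+1) := by ring_nf
  have h1 : ∀ n : ℕ, ∫ ℓ : (X × A) → ℝ,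
      (((⨆ h : B, (-Θ h + ((n:ℝ)+1)⁻¹ * w h + ∑ x, ℓ (x, pol h x)))
        - ⨆ h : B, (-Θ h + ∑ x, ℓ (x, pol h x))) * ((n:ℝ)+1)) ∂γ
      = (PhiN pol (fun h => -Θ h + ((n:ℝ)+1)⁻¹ * w h)
        - PhiN pol (fun h => -Θ h)) * ((n:ℝ)+1) := by
    intro n
    rw [integral_mul_const, integral_sub
      (integrable_supq pol (fun h => -Θ h + ((n:ℝ)+1)⁻¹ * w h))
      (integrable_supq pol (fun h => -Θ h))]
    rfl
  have h2 : ∫ ℓ : (X × A) → ℝ,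
      (∑ h : B, w h * (if sel ℓ = h then (1:ℝ) else 0)) ∂γ
      = ∑ h, w h * expInd B sel h := by
    rw [integral_finset_sum _ fun h _ => (integrable_ind sel hmeas h).const_mul _]
    exact Finset.sum_congr rfl fun h _ => integral_ind_mul_const sel hmeas w h
  rw [h2] at key
  exact key.congr h1

end Core

theorem ftrl_equals_expected_ftpl {X A B : Type*}
    [Fintype X] [Fintype A] [Fintype B]
    [Nonempty X] [Nonempty A] [Nonempty B] [DecidableEq B]
    (pol : B → X → A)
    (hsep : ∀ h h' : B, h ≠ h' → ∃ x : X, pol h x ≠ pol h' x)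
    (Θ : B → ℝ)
    (sel : ((X × A) → ℝ) → B)
    (hmeas : ∀ h : B,
      Measurable fun ℓ : (X × A) → ℝ => (if sel ℓ = h then (1:ℝ) else 0))
    (hsel : ∀ᵐ ℓ : (X × A) → ℝ ∂(gaussianPerturbation X A), ∀ h' : B,
      -Θ h' + ∑ x : X, ℓ (x, pol h' x)
        ≤ -Θ (sel ℓ) + ∑ x : X, ℓ (x, pol (sel ℓ) x)) :
    (fun h : B => ∫ ℓ : (X × A) → ℝ, (if sel ℓ = h then (1:ℝ) else 0)
        ∂(gaussianPerturbation X A)) ∈ stdSimplex ℝ B ∧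
    (∀ u ∈ stdSimplex ℝ B,
      (∑ h : B, Θ h * (∫ ℓ : (X × A) → ℝ, (if sel ℓ = h then (1:ℝ) else 0)
            ∂(gaussianPerturbation X A)))
        + RN pol (fun h : B => ∫ ℓ : (X × A) → ℝ,
            (if sel ℓ = h then (1:ℝ) else 0) ∂(gaussianPerturbation X A))
      ≤ (∑ h : B, Θ h * u h) + RN pol u) ∧
    (∀ u ∈ stdSimplex ℝ B,
      (∑ h : B, Θ h * u h) + RN pol u
        = (∑ h : B, Θ h * (∫ ℓ : (X × A) → ℝ,
              (if sel ℓ = h then (1:ℝ) else 0) ∂(gaussianPerturbation X A)))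
          + RN pol (fun h : B => ∫ ℓ : (X × A) → ℝ,
              (if sel ℓ = h then (1:ℝ) else 0) ∂(gaussianPerturbation X A)) →
      u = fun h : B => ∫ ℓ : (X × A) → ℝ,
            (if sel ℓ = h then (1:ℝ) else 0) ∂(gaussianPerturbation X A)) := by
  classical
  have hUe : ∀ h : B, (∫ ℓ : (X × A) → ℝ, (if sel ℓ = h then (1:ℝ) else 0)
      ∂(gaussianPerturbation X A)) = expInd B sel h := fun _ => rfl
  simp only [hUe]
  have hUmem : expInd B sel ∈ stdSimplex ℝ B := expInd_mem sel hmeas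
  -- bounded above: objective values
  have hbdd : ∀ u : B → ℝ, u ∈ stdSimplex ℝ B →
      BddAbove (Set.range fun Θ' : B → ℝ => (∑ h : B, Θ' h * u h) - PhiN pol Θ') := by
    intro u hu
    refine ⟨0, ?_⟩
    rintro y ⟨Θ', rfl⟩
    exact obj_bdd pol hu Θ'
  have hRle : ∀ u : B → ℝ, u ∈ stdSimplex ℝ B → ∀ Θ' : B → ℝ,
      (∑ h : B, Θ' h * u h) - PhiN pol Θ' ≤ RN pol u := by
    intro u hu Θ'
    rw [RN]
    exact le_ciSup (hbdd u hu) Θ'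
  have hsplit : ∀ (u c d : B → ℝ),
      ∑ h : B, (c h + d h) * u h = (∑ h : B, c h * u h) + ∑ h : B, d h * u h := by
    intro u c d
    rw [← Finset.sum_add_distrib]
    exact Finset.sum_congr rfl fun h _ => by ring
  have hzero : ∀ u : B → ℝ,
      (∑ h : B, Θ h * u h) + (∑ h : B, (fun h => -Θ h) h * u h) = 0 := by
    intro u
    rw [← Finset.sum_add_distrib]
    exact Finset.sum_eq_zero fun h _ => by ring
  -- RN at expInd
  have hRN_le : RN pol (expInd B sel)
      ≤ (∑ h : B, (fun h => -Θ h) h * expInd B sel h) - PhiN pol (fun h => -Θ h) := by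
    rw [RN]
    refine ciSup_le fun Θ' => ?_
    have hsg := subgrad pol Θ sel hmeas hsel Θ'
    have h1 : ∑ h : B, (Θ' h + Θ h) * expInd B sel h
        = (∑ h : B, Θ' h * expInd B sel h) + ∑ h : B, Θ h * expInd B sel h :=
      hsplit (expInd B sel) Θ' Θ
    have h2 := hzero (expInd B sel)
    beta_reduce at h2 ⊢
    linarith
  have hRN_ge : (∑ h : B, (fun h => -Θ h) h * expInd B sel h) - PhiN pol (fun h => -Θ h)
      ≤ RN pol (expInd B sel) := hRle _ hUmem (fun h => -Θ h)
  have hobj_star : (∑ h : B, Θ h * expInd B sel h) + RN pol (expInd B sel)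
      = -PhiN pol (fun h => -Θ h) := by
    have h2 := hzero (expInd B sel)
    beta_reduce at h2 hRN_le hRN_ge
    linarith
  refine ⟨hUmem, ?_, ?_⟩
  · -- minimality
    intro u hu
    have h3 := hRle u hu (fun h => -Θ h)
    have h2 := hzero u
    beta_reduce at h3 h2
    rw [hobj_star]
    linarith
  · -- uniqueness
    intro u hu heq
    have hobj_u : (∑ h : B, Θ h * u h) + RN pol u = -PhiN pol (fun h => -Θ h) := by
      rw [heq, hobj_star]
    have hkey : ∀ Θ' : B → ℝ,
        (∑ h : B, Θ h * u h) + ∑ h : B, Θ' h * u h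
          ≤ PhiN pol Θ' - PhiN pol (fun h => -Θ h) + 0 := by
      intro Θ'
      have h3 := hRle u hu Θ'
      linarith
    have hw : ∀ w : B → ℝ, ∑ h : B, w h * u h ≤ ∑ h : B, w h * expInd B sel h := by
      intro w
      have hten := deriv_tendsto pol Θ sel hmeas hsep hsel w
      refine ge_of_tendsto hten (Filter.Eventually.of_forall fun n => ?_)
      have h5 := hkey (fun h => -Θ h + ((n:ℝ)+1)⁻¹ * w h)
      beta_reduce at h5
      have h6 : ∑ h : B, (-Θ h + ((n:ℝ)+1)⁻¹ * w h) * u h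
          = (∑ h : B, (-Θ h) * u h) + ((n:ℝ)+1)⁻¹ * ∑ h : B, w h * u h := by
        rw [Finset.mul_sum, ← Finset.sum_add_distrib]
        exact Finset.sum_congr rfl fun h _ => by ring
      have h7 : (∑ h : B, Θ h * u h) + ∑ h : B, (-Θ h) * u h = 0 := by
        rw [← Finset.sum_add_distrib]
        exact Finset.sum_eq_zero fun h _ => by ring
      rw [h6] at h5
      have h8 : ((n:ℝ)+1)⁻¹ * ∑ h : B, w h * u h
          ≤ PhiN pol (fun h => -Θ h + ((n:ℝ)+1)⁻¹ * w h) - PhiN pol (fun h => -Θ h) := by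
        linarith
      have hpos : (0:ℝ) < (n:ℝ)+1 := by positivity
      have h9 := mul_le_mul_of_nonneg_right h8 hpos.le
      calc ∑ h : B, w h * u h
          = (((n:ℝ)+1)⁻¹ * ∑ h : B, w h * u h) * ((n:ℝ)+1) := by
            rw [mul_comm (((n:ℝ)+1)⁻¹) _, mul_assoc, inv_mul_cancel₀ hpos.ne', mul_one]
        _ ≤ (PhiN pol (fun h => -Θ h + ((n:ℝ)+1)⁻¹ * w h)
              - PhiN pol (fun h => -Θ h)) * ((n:ℝ)+1) := h9
    funext h0
    have hle1 : u h0 ≤ expInd B sel h0 := by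
      have := hw (fun h => if h = h0 then (1:ℝ) else 0)
      simpa using this
    have hle2 : expInd B sel h0 ≤ u h0 := by
      have := hw (fun h => -(if h = h0 then (1:ℝ) else 0))
      simp only [neg_mul] at this
      rw [Finset.sum_neg_distrib, Finset.sum_neg_distrib] at this
      simp only [ite_mul, one_mul, zero_mul, Finset.sum_ite_eq', Finset.mem_univ,
        if_true] at this
      linarith
    exact le_antisymm hle1 hle2
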